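/- If α is a positive integer and J = [-α, α] ∩ ℤ, then the number of 4-tuples (x₁, x₂, x₃, x₄) ∈ J⁴ with x₁ + x₂ + x₃ + x₄ = 0 is exactly 16α³/3 + 8α² + 14α/3 + 1. -/

import Mathlib

open Finset

lemma sumsq (m : ℕ) :
    ∑ k ∈ Icc (1:ℤ) (m:ℤ), (k:ℚ)^2 = m*(m+1)*(2*m+1)/6 := by
  induction m with
  | zero => simp
  | succ m ih =>
      have h : Icc (1:ℤ) ((m:ℤ)+1) = insert ((m:ℤ)+1) (Icc 1 (m:ℤ)) := by
        ext x; simp [Finset.mem_Icc]; omega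
      push_cast
      rw [h, Finset.sum_insert (by simp), ih]
      push_cast; ring

lemma sumabs (m : ℕ) (g : ℤ → ℚ) :
    ∑ c ∈ Icc (-(m:ℤ)) (m:ℤ), g |c| = g 0 + 2 * ∑ c ∈ Icc (1:ℤ) (m:ℤ), g c := by
  induction m with
  | zero => simp
  | succ m ih =>
      have h : Icc (-((m:ℤ)+1)) ((m:ℤ)+1)
          = insert (-((m:ℤ)+1)) (insert ((m:ℤ)+1) (Icc (-(m:ℤ)) (m:ℤ))) := by
        ext x; simp [Finset.mem_Icc, Finset.mem_insert]; omega
      have h2 : Icc (1:ℤ) ((m:ℤ)+1) = insert ((m:ℤ)+1) (Icc 1 (m:ℤ)) := by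
        ext x; simp [Finset.mem_Icc]; omega
      push_cast
      rw [h, Finset.sum_insert (by simp only [Finset.mem_insert, Finset.mem_Icc]; omega),
        Finset.sum_insert (by simp only [Finset.mem_Icc]; omega), ih, h2,
        Finset.sum_insert (by simp only [Finset.mem_Icc]; omega)]
      have e1 : |(-((m:ℤ)+1))| = (m:ℤ)+1 := by rw [abs_neg]; exact abs_of_nonneg (by positivity)
      have e2 : |((m:ℤ)+1)| = (m:ℤ)+1 := abs_of_nonneg (by positivity)
      rw [e1, e2]; ring

lemma paircard (α c : ℤ) (hc : |c| ≤ 2*α) :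
    ((((Icc (-α) α ×ˢ Icc (-α) α).filter (fun p => p.1 + p.2 = c)).card : ℤ)
      = 2*α + 1 - |c|) := by
  have h : ((Icc (-α) α ×ˢ Icc (-α) α).filter (fun p => p.1 + p.2 = c)).card
      = (Icc (max (-α) (c-α)) (min α (c+α))).card := by
    apply Finset.card_nbij' (i := fun p => p.1) (j := fun x => (x, c - x))
    · intro p hp
      simp only [Finset.mem_coe, Finset.mem_filter, Finset.mem_product, Finset.mem_Icc] at hp ⊢
      omega
    · intro x hx
      simp only [Finset.mem_coe, Finset.mem_filter, Finset.mem_product, Finset.mem_Icc] at hx ⊢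
      omega
    · intro p hp
      obtain ⟨a, b⟩ := p
      simp only [Finset.mem_coe, Finset.mem_filter, Finset.mem_product, Finset.mem_Icc] at hp
      dsimp only
      simp only [Prod.mk.injEq, true_and]
      omega
    · intro x hx
      rfl
  rw [h, Int.card_Icc]
  rcases abs_cases c with ⟨h1, h2⟩ | ⟨h1, h2⟩ <;> omega

lemma fiber (α c : ℤ) :
    ((((Icc (-α) α ×ˢ Icc (-α) α ×ˢ Icc (-α) α ×ˢ Icc (-α) α).filter
        (fun p => p.1 + p.2.1 + p.2.2.1 + p.2.2.2 = 0)).filter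
        (fun p => p.1 + p.2.1 = c)).card
      = ((Icc (-α) α ×ˢ Icc (-α) α).filter (fun p => p.1 + p.2 = c)).card *
        ((Icc (-α) α ×ˢ Icc (-α) α).filter (fun p => p.1 + p.2 = -c)).card) := by
  rw [← Finset.card_product]
  apply Finset.card_nbij' (i := fun p => ((p.1, p.2.1), (p.2.2.1, p.2.2.2)))
    (j := fun q => (q.1.1, q.1.2, q.2.1, q.2.2))
  · intro p hp
    simp only [Finset.mem_coe, Finset.mem_filter, Finset.mem_product, Finset.mem_Icc] at hp ⊢
    omega
  · intro q hq
    simp only [Finset.mem_coe, Finset.mem_filter, Finset.mem_product, Finset.mem_Icc] at hq ⊢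
    omega
  · intro p hp; rfl
  · intro q hq; rfl

theorem stmt_8 (α : ℤ) (hα : 0 < α) :
    ((((Finset.Icc (-α) α ×ˢ Finset.Icc (-α) α ×ˢ Finset.Icc (-α) α ×ˢ
          Finset.Icc (-α) α).filter
        (fun p => p.1 + p.2.1 + p.2.2.1 + p.2.2.2 = 0)).card : ℚ) =
      16 * (α : ℚ) ^ 3 / 3 + 8 * α ^ 2 + 14 * α / 3 + 1) := by
  set P := (Finset.Icc (-α) α ×ˢ Finset.Icc (-α) α ×ˢ Finset.Icc (-α) α ×ˢ
      Finset.Icc (-α) α).filter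
      (fun p => p.1 + p.2.1 + p.2.2.1 + p.2.2.2 = 0) with hP
  have hmem : ∀ p ∈ P, p.1 + p.2.1 ∈ Icc (-(2*α)) (2*α) := by
    intro p hp
    simp only [hP, Finset.mem_filter, Finset.mem_product, Finset.mem_Icc] at hp ⊢
    omega
  have h1 : P.card = ∑ c ∈ Icc (-(2*α)) (2*α), (P.filter (fun p => p.1 + p.2.1 = c)).card :=
    Finset.card_eq_sum_card_fiberwise hmem
  set g : ℤ → ℚ := fun t => (((2*α+1-t : ℤ) : ℚ))^2 with hg
  have h2 : (P.card : ℚ) = ∑ c ∈ Icc (-(2*α)) (2*α), g |c| := by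
    rw [h1, Nat.cast_sum]
    refine Finset.sum_congr rfl (fun c hc => ?_)
    simp only [Finset.mem_Icc] at hc
    have hcabs : |c| ≤ 2*α := by rcases abs_cases c with ⟨e1,e2⟩|⟨e1,e2⟩ <;> omega
    have hcabs' : |(-c)| ≤ 2*α := by rwa [abs_neg]
    rw [hP, fiber α c, Nat.cast_mul]
    have e1 : ((((Icc (-α) α ×ˢ Icc (-α) α).filter (fun p => p.1 + p.2 = c)).card : ℚ))
        = ((2*α+1-|c| : ℤ) : ℚ) := by
      rw [← paircard α c hcabs]; push_cast; ring
    have e2 : ((((Icc (-α) α ×ˢ Icc (-α) α).filter (fun p => p.1 + p.2 = -c)).card : ℚ))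
        = ((2*α+1-|c| : ℤ) : ℚ) := by
      rw [← abs_neg c, ← paircard α (-c) hcabs']; push_cast; ring
    rw [e1, e2, hg]
    ring
  set m : ℕ := (2*α).toNat with hmdef
  have hm : (m : ℤ) = 2*α := Int.toNat_of_nonneg (by omega)
  have h3 : Icc (-(2*α)) (2*α) = Icc (-(m:ℤ)) (m:ℤ) := by rw [hm]
  rw [h2, h3, sumabs m g]
  have h4 : ∑ c ∈ Icc (1:ℤ) (m:ℤ), g c = ∑ k ∈ Icc (1:ℤ) (m:ℤ), (k:ℚ)^2 := by
    refine Finset.sum_nbij' (i := fun c => 2*α+1-c) (j := fun k => 2*α+1-k) ?_ ?_ ?_ ?_ ?_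
    · intro a ha; simp only [Finset.mem_Icc] at ha ⊢; omega
    · intro a ha; simp only [Finset.mem_Icc] at ha ⊢; omega
    · intro a ha; ring
    · intro a ha; ring
    · intro a ha; rw [hg]
  rw [h4, sumsq m]
  have hmq : (m : ℚ) = 2*(α:ℚ) := by exact_mod_cast hm
  rw [hmq, hg]
  push_cast
  ring
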